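/- Let k ≥ 2 be an integer, let μ ≥ 0 be a real, and let α, β be reals with 0 ≤ α < β < k. Then the function φ(s) = (μ·s^α + s^β)^{−1} satisfies condition (1.11): for all reals t > s > 0, (s·φ(s)^{1/k} − t·φ(t)^{1/k}) · (φ(s)^{(k−1)/k} − φ(t)^{(k−1)/k}) < 0. -/
import Mathlib

lemma aux_cross (k : ℝ) (s t γ : ℝ) (hs : 0 < s) (hst : s < t)     (hγk : γ < k) : s ^ k * t ^ γ < s ^ γ * t ^ k := by
  have ht : 0 < t := hs.trans hst
  have hsk : s ^ k = s ^ γ * s ^ (k - γ) := by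
    rw [← Real.rpow_add hs]; ring_nf
  have htk : t ^ k = t ^ (k - γ) * t ^ γ := by
    rw [← Real.rpow_add ht]; ring_nf
  rw [hsk, htk]
  have h1 : s ^ (k - γ) < t ^ (k - γ) :=
    Real.rpow_lt_rpow hs.le hst (by linarith)
  have h2 : (0:ℝ) < s ^ γ := Real.rpow_pos_of_pos hs γ
  have h3 : (0:ℝ) < t ^ γ := Real.rpow_pos_of_pos ht γ
  calc s ^ γ * s ^ (k - γ) * t ^ γ < s ^ γ * t ^ (k - γ) * t ^ γ := by
        apply mul_lt_mul_of_pos_right _ h3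
        exact mul_lt_mul_of_pos_left h1 h2
    _ = s ^ γ * (t ^ (k - γ) * t ^ γ) := by ring

theorem condition_1_11_of_inv_sum_powers (k : ℕ) (hk : 2 ≤ k) (μ α β : ℝ)
    (hμ : 0 ≤ μ) (hα : 0 ≤ α) (hαβ : α < β) (hβ : β < (k : ℝ))
    (φ : ℝ → ℝ) (hφ : ∀ s : ℝ, φ s = (μ * s ^ α + s ^ β)⁻¹) :
    ∀ s t : ℝ, 0 < s → s < t →
      (s * φ s ^ (1 / (k : ℝ)) - t * φ t ^ (1 / (k : ℝ))) *
        (φ s ^ (((k : ℝ) - 1) / (k : ℝ)) - φ t ^ (((k : ℝ) - 1) / (k : ℝ))) < 0 := by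
  intro s t hs hst
  have ht : 0 < t := hs.trans hst
  have hkpos : (0:ℝ) < (k:ℝ) := by
    have : (0:ℕ) < k := by omega
    exact_mod_cast this
  have hβpos : 0 < β := lt_of_le_of_lt hα hαβ
  set A := μ * s ^ α + s ^ β with hA
  set B := μ * t ^ α + t ^ β with hB
  have hApos : 0 < A := by
    have := Real.rpow_pos_of_pos hs β
    have := Real.rpow_nonneg hs.le α
    positivity
  have hBpos : 0 < B := by
    have := Real.rpow_pos_of_pos ht β
    have := Real.rpow_nonneg ht.le α
    positivity
  have hAB : A < B := by
    apply add_lt_add_of_le_of_lt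
    · exact mul_le_mul_of_nonneg_left (Real.rpow_le_rpow hs.le hst.le hα) hμ
    · exact Real.rpow_lt_rpow hs.le hst hβpos
  have hφs : φ s = A⁻¹ := hφ s
  have hφt : φ t = B⁻¹ := hφ t
  have hinv : B⁻¹ < A⁻¹ := by
    exact inv_strictAnti₀ hApos hAB
  -- second factor positive
  have hsecond : 0 < φ s ^ (((k : ℝ) - 1) / (k : ℝ)) - φ t ^ (((k : ℝ) - 1) / (k : ℝ)) := by
    rw [hφs, hφt, sub_pos]
    apply Real.rpow_lt_rpow (inv_pos.mpr hBpos).le hinv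
    apply div_pos _ hkpos
    have : (2:ℝ) ≤ (k:ℝ) := by exact_mod_cast hk
    linarith
  -- key inequality for first factor
  have hkey : s ^ (k:ℝ) * A⁻¹ < t ^ (k:ℝ) * B⁻¹ := by
    rw [← div_eq_mul_inv, ← div_eq_mul_inv, div_lt_div_iff₀ hApos hBpos]
    have h1 : s ^ (k:ℝ) * (μ * t ^ α) ≤ t ^ (k:ℝ) * (μ * s ^ α) := by
      have := aux_cross (k:ℝ) s t α hs hst (hαβ.trans hβ)
      nlinarith [this]
    have h2 : s ^ (k:ℝ) * t ^ β < t ^ (k:ℝ) * s ^ β := by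
      have := aux_cross (k:ℝ) s t β hs hst hβ
      linarith
    rw [hA, hB]
    nlinarith [h1, h2]
  have hfirst : s * φ s ^ (1 / (k : ℝ)) < t * φ t ^ (1 / (k : ℝ)) := by
    rw [hφs, hφt]
    have hrw : ∀ x : ℝ, 0 < x → ∀ C : ℝ, 0 < C →
        x * C⁻¹ ^ (1 / (k:ℝ)) = (x ^ (k:ℝ) * C⁻¹) ^ (1 / (k:ℝ)) := by
      intro x hx C hC
      rw [Real.mul_rpow (Real.rpow_nonneg hx.le _) (inv_nonneg.mpr hC.le)]
      have : (x ^ (k:ℝ)) ^ (1/(k:ℝ)) = x := by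
        rw [← Real.rpow_mul hx.le, mul_one_div_cancel (ne_of_gt hkpos), Real.rpow_one]
      rw [this]
    rw [hrw s hs A hApos, hrw t ht B hBpos]
    apply Real.rpow_lt_rpow _ hkey (by positivity)
    positivity
  have h1 : s * φ s ^ (1 / (k : ℝ)) - t * φ t ^ (1 / (k : ℝ)) < 0 := by linarith
  exact mul_neg_of_neg_of_pos h1 hsecond
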